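/- Let C ⊆ ℝⁿ be a nonempty closed convex set, M > 0, and f : ℝⁿ → ℝ be continuously differentiable and M-strongly convex on C, with ∇f L-Lipschitz on C (L > 0) and satisfying condition (B) on C. Let (x^k), (p^k), (v_k) be Frank–Wolfe sequences for f on C with v_k < 0 for all k. Then (x^k) converges to a point x* ∈ C that is a solution of min_{z∈C} f(z), and moreover ‖x^k − x*‖ ≤ √(2(f(x^k) − f(x*))/M) for all k = 0, 1, …. -/

import Mathlib

open scoped RealInnerProductSpace

variable {n : ℕ}
local notation "E" => EuclideanSpace ℝ (Fin n)

lemma fw_lineDeriv (f : E → ℝ) (hf : ContDiff ℝ 1 f) (a d : E) (t : ℝ) :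
    HasDerivAt (fun s : ℝ => f (a + s • d)) ⟪gradient f (a + t • d), d⟫ t := by
  have hdf : DifferentiableAt ℝ f (a + t • d) := (hf.differentiable one_ne_zero) _
  have hF : HasFDerivAt f (InnerProductSpace.toDual ℝ _ (gradient f (a + t • d))) (a + t • d) :=
    hdf.hasGradientAt.hasFDerivAt
  have hline : HasDerivAt (fun s : ℝ => a + s • d) d t := by
    simpa using ((hasDerivAt_id t).smul_const d).const_add a
  have := hF.comp_hasDerivAt t hline
  exact this

lemma fw_slope_tendsto (f : E → ℝ) (hf : ContDiff ℝ 1 f) (a d : E) :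
    Filter.Tendsto (fun t : ℝ => (f (a + t • d) - f a) / t) (nhdsWithin 0 (Set.Ioi 0))
      (nhds ⟪gradient f a, d⟫) := by
  have h := fw_lineDeriv f hf a d 0
  rw [show a + (0:ℝ) • d = a by simp] at h
  have h2 := hasDerivAt_iff_tendsto_slope.mp h
  have h3 : Filter.Tendsto (slope (fun s : ℝ => f (a + s • d)) 0)
      (nhdsWithin 0 (Set.Ioi 0)) (nhds ⟪gradient f a, d⟫) :=
    h2.mono_left (nhdsWithin_mono _ (by intro t ht; exact ne_of_gt ht))
  refine h3.congr' ?_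
  filter_upwards [self_mem_nhdsWithin] with t ht
  rw [slope_def_field]
  simp only [zero_smul, add_zero, sub_zero]

lemma fw_sc_grad (C : Set E) (M : ℝ) (f : E → ℝ) (hf : ContDiff ℝ 1 f)
    (hsc : ∀ a ∈ C, ∀ b ∈ C, ∀ t : ℝ, 0 ≤ t → t ≤ 1 →
      f (t • a + (1 - t) • b) ≤ t * f a + (1 - t) * f b - M / 2 * t * (1 - t) * ‖a - b‖ ^ 2)
    {a b : E} (ha : a ∈ C) (hb : b ∈ C) :
    f a + ⟪gradient f a, b - a⟫ + M / 2 * ‖b - a‖ ^ 2 ≤ f b := by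
  have key : ∀ t : ℝ, t ∈ Set.Ioc (0:ℝ) 1 →
      (f (a + t • (b - a)) - f a) / t ≤ f b - f a - M / 2 * (1 - t) * ‖b - a‖ ^ 2 := by
    intro t ht
    have h := hsc b hb a ha t ht.1.le ht.2
    have heq : t • b + (1 - t) • a = a + t • (b - a) := by module
    rw [heq] at h
    rw [div_le_iff₀ ht.1]
    nlinarith [ht.1]
  have hL : Filter.Tendsto (fun t : ℝ => (f (a + t • (b - a)) - f a) / t)
      (nhdsWithin 0 (Set.Ioi 0)) (nhds ⟪gradient f a, b - a⟫) :=
    fw_slope_tendsto f hf a (b - a)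
  have hR : Filter.Tendsto (fun t : ℝ => f b - f a - M / 2 * (1 - t) * ‖b - a‖ ^ 2)
      (nhdsWithin 0 (Set.Ioi 0)) (nhds (f b - f a - M / 2 * (1 - (0:ℝ)) * ‖b - a‖ ^ 2)) := by
    apply Filter.Tendsto.mono_left _ nhdsWithin_le_nhds
    exact (Continuous.tendsto (by continuity) 0)
  have := le_of_tendsto_of_tendsto hL hR (by
    filter_upwards [Ioc_mem_nhdsGT_of_mem (by norm_num : (0:ℝ) ∈ Set.Ico (0:ℝ) 1)] with t ht
    exact key t ht)
  rw [sub_zero, mul_one] at this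
  linarith

lemma fw_descent (C : Set E) (hCconv : Convex ℝ C) (L : ℝ) (f : E → ℝ) (hf : ContDiff ℝ 1 f)
    (hLip : ∀ a ∈ C, ∀ b ∈ C, ‖gradient f a - gradient f b‖ ≤ L * ‖a - b‖)
    {a b : E} (ha : a ∈ C) (hb : b ∈ C) :
    f b ≤ f a + ⟪gradient f a, b - a⟫ + L / 2 * ‖b - a‖ ^ 2 := by
  set ψ : ℝ → ℝ := fun t => f (a + t • (b - a)) - t * ⟪gradient f a, b - a⟫
    - L / 2 * t ^ 2 * ‖b - a‖ ^ 2 with hψ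
  have hder : ∀ t : ℝ, HasDerivAt ψ
      (⟪gradient f (a + t • (b - a)), b - a⟫ - ⟪gradient f a, b - a⟫ - L * t * ‖b - a‖ ^ 2) t := by
    intro t
    have h1 := fw_lineDeriv f hf a (b - a) t
    have h2 : HasDerivAt (fun t : ℝ => t * ⟪gradient f a, b - a⟫) ⟪gradient f a, b - a⟫ t := by
      simpa using (hasDerivAt_id t).mul_const ⟪gradient f a, b - a⟫
    have h3 : HasDerivAt (fun t : ℝ => L / 2 * t ^ 2 * ‖b - a‖ ^ 2)
        (L * t * ‖b - a‖ ^ 2) t := by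
      have := ((hasDerivAt_pow 2 t).const_mul (L / 2)).mul_const (‖b - a‖ ^ 2)
      exact this.congr_deriv (by push_cast; ring)
    exact (h1.sub h2).sub h3
  have hmem : ∀ t ∈ Set.Icc (0:ℝ) 1, a + t • (b - a) ∈ C := by
    intro t ht
    have := hCconv ha hb (by linarith [ht.2] : (0:ℝ) ≤ 1 - t) ht.1 (by ring)
    convert this using 1
    module
  have hanti : AntitoneOn ψ (Set.Icc (0:ℝ) 1) := by
    apply antitoneOn_of_deriv_nonpos (convex_Icc 0 1)
    · refine Continuous.continuousOn ?_
      have h1 : Continuous fun t : ℝ => a + t • (b - a) :=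
        continuous_const.add (continuous_id.smul continuous_const)
      exact ((hf.continuous.comp h1).sub (continuous_id.mul continuous_const)).sub
        ((continuous_const.mul (continuous_pow 2)).mul continuous_const)
    · intro t ht
      exact (hder t).differentiableAt.differentiableWithinAt
    · intro t ht
      rw [interior_Icc] at ht
      rw [(hder t).deriv]
      have hc : a + t • (b - a) ∈ C := hmem t (Set.mem_Icc_of_Ioo ht)
      have hCS : ⟪gradient f (a + t • (b - a)) - gradient f a, b - a⟫
          ≤ ‖gradient f (a + t • (b - a)) - gradient f a‖ * ‖b - a‖ :=
        real_inner_le_norm _ _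
      have hlip' : ‖gradient f (a + t • (b - a)) - gradient f a‖ ≤ L * (t * ‖b - a‖) := by
        have := hLip _ hc _ ha
        simpa [add_sub_cancel_left, norm_smul, abs_of_pos ht.1] using this
      have hsplit : ⟪gradient f (a + t • (b - a)) - gradient f a, b - a⟫
          = ⟪gradient f (a + t • (b - a)), b - a⟫ - ⟪gradient f a, b - a⟫ :=
        inner_sub_left _ _ _
      have hnn : (0:ℝ) ≤ ‖b - a‖ := norm_nonneg _
      nlinarith [hCS, hlip', mul_le_mul_of_nonneg_right hlip' hnn]
  have h01 := hanti (Set.left_mem_Icc.mpr zero_le_one) (Set.right_mem_Icc.mpr zero_le_one)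
    zero_le_one
  have e0 : ψ 0 = f a := by simp [hψ]
  have e1 : ψ 1 = f b - ⟪gradient f a, b - a⟫ - L / 2 * ‖b - a‖ ^ 2 := by
    simp [hψ]
  rw [e0, e1] at h01
  linarith

set_option maxHeartbeats 1000000 in
/-- If `f` is `M`-strongly convex on `C`, the Frank–Wolfe sequence `(x k)` converges to a
solution `x*` of the problem of minimizing `f` over `C`, and
`‖x k - x*‖ ≤ √(2 (f (x k) - f x*) / M)` for all `k`. -/
theorem frank_wolfe_strongly_convex_convergence (n : ℕ) (C : Set (EuclideanSpace ℝ (Fin n)))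
    (hCne : C.Nonempty) (hCcl : IsClosed C) (hCconv : Convex ℝ C)
    (M : ℝ) (hM : 0 < M)
    (f : EuclideanSpace ℝ (Fin n) → ℝ) (hf : ContDiff ℝ 1 f)
    (hsc : ∀ a ∈ C, ∀ b ∈ C, ∀ t : ℝ, 0 ≤ t → t ≤ 1 →
      f (t • a + (1 - t) • b) ≤ t * f a + (1 - t) * f b - M / 2 * t * (1 - t) * ‖a - b‖ ^ 2)
    (L : ℝ) (hL : 0 < L)
    (hLip : ∀ a ∈ C, ∀ b ∈ C, ‖gradient f a - gradient f b‖ ≤ L * ‖a - b‖)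
    (hB : ∀ a ∈ C, ∀ d : EuclideanSpace ℝ (Fin n),
      (∀ y ∈ C, ∀ t : ℝ, 0 ≤ t → y + t • d ∈ C) → d ≠ 0 → 0 < ⟪gradient f a, d⟫)
    (x p : ℕ → EuclideanSpace ℝ (Fin n)) (v : ℕ → ℝ)
    (hx0 : x 0 ∈ C) (hpC : ∀ k, p k ∈ C)
    (hpmin : ∀ k, ∀ q ∈ C, ⟪gradient f (x k), p k - x k⟫ ≤ ⟪gradient f (x k), q - x k⟫)
    (hv : ∀ k, v k = ⟪gradient f (x k), p k - x k⟫)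
    (hiter : ∀ k, x (k + 1) =
      x k + (min 1 (|v k| / (L * ‖p k - x k‖ ^ 2))) • (p k - x k))
    (hvneg : ∀ k, v k < 0) :
    ∃ xstar ∈ C, Filter.Tendsto x Filter.atTop (nhds xstar) ∧
      (∀ z ∈ C, f xstar ≤ f z) ∧
      ∀ k, ‖x k - xstar‖ ≤ Real.sqrt (2 * (f (x k) - f xstar) / M) := by
  -- gradient is continuous
  have hgcont : Continuous (gradient f) := by
    have h1 : Continuous (fderiv ℝ f) := hf.continuous_fderiv one_ne_zero
    exact ((InnerProductSpace.toDual ℝ _).symm.continuous.comp h1 : _)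
  -- iterates stay in C
  have hxC : ∀ k, x k ∈ C := by
    intro k
    induction k with
    | zero => exact hx0
    | succ k ih =>
      rw [hiter k]
      set lam := min 1 (|v k| / (L * ‖p k - x k‖ ^ 2)) with hlam
      have hlam0 : 0 ≤ lam := le_min zero_le_one (div_nonneg (abs_nonneg _) (by positivity))
      have hlam1 : lam ≤ 1 := min_le_left _ _
      have := hCconv ih (hpC k) (by linarith : (0:ℝ) ≤ 1 - lam) hlam0 (by ring)
      convert this using 1
      module
  -- direction is nonzero
  have hdne : ∀ k, p k - x k ≠ 0 := by
    intro k hk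
    have := hv k
    rw [hk, inner_zero_right] at this
    exact absurd (this ▸ hvneg k) (lt_irrefl 0)
  have hD2pos : ∀ k, 0 < ‖p k - x k‖ ^ 2 := fun k => pow_pos (norm_pos_iff.mpr (hdne k)) 2
  -- descent estimate
  have hdec : ∀ k, f (x (k+1)) ≤ f (x k)
      - (1/2) * min (|v k|) (v k ^ 2 / (L * ‖p k - x k‖ ^ 2)) := by
    intro k
    have hD2p : 0 < ‖p k - x k‖ ^ 2 := hD2pos k
    set D2 := ‖p k - x k‖ ^ 2 with hD2
    set lam := min 1 (|v k| / (L * D2)) with hlam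
    have hxk1 : x (k+1) = x k + lam • (p k - x k) := hiter k
    have hdesc := fw_descent C hCconv L f hf hLip (hxC k) (hxC (k+1))
    have hba : x (k+1) - x k = lam • (p k - x k) := by rw [hxk1]; abel
    rw [hba, inner_smul_right, ← hv k, norm_smul] at hdesc
    have hlam0 : 0 ≤ lam := le_min zero_le_one (div_nonneg (abs_nonneg _) (by positivity))
    have hnsq : (‖lam‖ * ‖p k - x k‖) ^ 2 = lam ^ 2 * D2 := by
      rw [mul_pow, hD2, Real.norm_eq_abs, sq_abs]
    rw [hnsq] at hdesc
    have hvk := hvneg k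
    have habs : |v k| = -(v k) := abs_of_neg hvk
    have hLD2 : 0 < L * D2 := by positivity
    rcases le_or_gt (|v k|) (L * D2) with h | h
    · have hlameq : lam = |v k| / (L * D2) :=
        min_eq_right ((div_le_one hLD2).mpr h)
      have hmineq : min (|v k|) (v k ^ 2 / (L * D2)) = v k ^ 2 / (L * D2) := by
        apply min_eq_right
        rw [div_le_iff₀ hLD2, ← sq_abs]
        nlinarith [abs_nonneg (v k)]
      rw [hmineq]
      rw [hlameq, habs] at hdesc
      have e1 : -(v k) / (L * D2) * v k + L / 2 * ((-(v k) / (L * D2)) ^ 2 * D2)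
          = -(1/2) * (v k ^ 2 / (L * D2)) := by
        field_simp
        ring
      linarith [hdesc, e1.le, e1.ge]
    · have hlameq : lam = 1 := min_eq_left (by rw [le_div_iff₀ hLD2]; linarith)
      have hmineq : min (|v k|) (v k ^ 2 / (L * D2)) = |v k| := by
        apply min_eq_left
        rw [le_div_iff₀ hLD2, ← sq_abs]
        nlinarith [abs_nonneg (v k)]
      rw [hmineq]
      rw [hlameq] at hdesc
      simp only [one_pow, one_mul, one_smul] at hdesc
      linarith [hdesc]
  have hminnn : ∀ k, 0 ≤ min (|v k|) (v k ^ 2 / (L * ‖p k - x k‖ ^ 2)) := fun k =>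
    le_min (abs_nonneg _) (div_nonneg (sq_nonneg _) (by positivity))
  have hfmono : Antitone (fun k => f (x k)) :=
    antitone_nat_of_succ_le (fun k => by have h1 := hdec k; have h2 := hminnn k; linarith)
  -- existence of a minimizer
  set G := ‖gradient f (x 0)‖ with hG
  set R := 2 * G / M + 1 with hR
  have hGnn : 0 ≤ G := norm_nonneg _
  have hRpos : 0 < R := by positivity
  have hKcomp : IsCompact (C ∩ Metric.closedBall (x 0) R) :=
    (isCompact_closedBall _ _).inter_left hCcl
  have hKne : (C ∩ Metric.closedBall (x 0) R).Nonempty :=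
    ⟨x 0, hx0, Metric.mem_closedBall_self hRpos.le⟩
  obtain ⟨xstar, hxsK, hminK⟩ := hKcomp.exists_isMinOn hKne hf.continuous.continuousOn
  have hxsC : xstar ∈ C := hxsK.1
  have hfs0 : f xstar ≤ f (x 0) :=
    isMinOn_iff.mp hminK (x 0) ⟨hx0, Metric.mem_closedBall_self hRpos.le⟩
  have hglobal : ∀ z ∈ C, f xstar ≤ f z := by
    intro z hz
    by_cases hzb : z ∈ Metric.closedBall (x 0) R
    · exact isMinOn_iff.mp hminK z ⟨hz, hzb⟩
    · have hr : R < ‖z - x 0‖ := by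
        rw [Metric.mem_closedBall, dist_eq_norm] at hzb
        linarith [not_le.mp hzb]
      have hsg := fw_sc_grad C M f hf hsc hx0 hz
      have hinner : -(G * ‖z - x 0‖) ≤ ⟪gradient f (x 0), z - x 0⟫ := by
        have h1 := abs_real_inner_le_norm (gradient f (x 0)) (z - x 0)
        have h2 := neg_abs_le (⟪gradient f (x 0), z - x 0⟫ : ℝ)
        rw [← hG] at h1
        linarith
      have hrpos : 0 < ‖z - x 0‖ := hRpos.trans hr
      have h4 : M * R = 2 * G + M := by rw [hR]; field_simp
      have h3 : 2 * G + M < M * ‖z - x 0‖ := by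
        rw [← h4]; exact (mul_lt_mul_iff_right₀ hM).mpr hr
      have hlt : f (x 0) < f z := by
        nlinarith [mul_pos hrpos (by linarith : (0:ℝ) < M * ‖z - x 0‖ - 2 * G - M),
          mul_pos hrpos hM]
      linarith
  -- first-order optimality at xstar
  have hopt : ∀ z ∈ C, 0 ≤ ⟪gradient f xstar, z - xstar⟫ := by
    intro z hz
    refine le_of_tendsto_of_tendsto (tendsto_const_nhds (α := ℝ))
      (fw_slope_tendsto f hf xstar (z - xstar)) ?_
    filter_upwards [Ioc_mem_nhdsGT_of_mem (by norm_num : (0:ℝ) ∈ Set.Ico (0:ℝ) 1)] with t ht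
    have hmem : xstar + t • (z - xstar) ∈ C := by
      have := hCconv hxsC hz (by linarith [ht.2] : (0:ℝ) ≤ 1 - t) ht.1.le (by ring)
      convert this using 1
      module
    exact div_nonneg (by linarith [hglobal _ hmem]) ht.1.le
  -- strong convexity key inequality at xstar
  have hkey : ∀ z ∈ C, M / 2 * ‖z - xstar‖ ^ 2 ≤ f z - f xstar := by
    intro z hz
    have h1 := fw_sc_grad C M f hf hsc hxsC hz
    have h2 := hopt z hz
    linarith
  -- the norm bound
  have hbound : ∀ k, ‖x k - xstar‖ ≤ Real.sqrt (2 * (f (x k) - f xstar) / M) := by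
    intro k
    have h1 := hkey _ (hxC k)
    rw [Real.le_sqrt (norm_nonneg _) (div_nonneg (by linarith [hglobal _ (hxC k)]) hM.le)]
    rw [le_div_iff₀ hM]
    nlinarith
  -- gap sequence
  set s : ℕ → ℝ := fun k => f (x k) - f xstar with hs
  have hs0 : ∀ k, 0 ≤ s k := fun k => sub_nonneg.mpr (hglobal _ (hxC k))
  have hsanti : Antitone s := fun a b hab => sub_le_sub_right (hfmono hab) _
  have hbdd : BddBelow (Set.range s) := ⟨0, by rintro _ ⟨k, rfl⟩; exact hs0 k⟩
  have hsl : Filter.Tendsto s Filter.atTop (nhds (⨅ k, s k)) := tendsto_atTop_ciInf hsanti hbdd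
  set l := ⨅ k, s k with hl
  have hl0 : 0 ≤ l := le_ciInf hs0
  have hls : ∀ k, l ≤ s k := fun k => ciInf_le hbdd k
  have hlzero : l = 0 := by
    by_contra hne
    have hlpos : 0 < l := lt_of_le_of_ne hl0 (Ne.symm hne)
    have hvs : ∀ k, v k ≤ -(s k) := by
      intro k
      have h1 := hpmin k xstar hxsC
      have h2 := fw_sc_grad C M f hf hsc (hxC k) hxsC
      have h3 : (0:ℝ) ≤ M / 2 * ‖xstar - x k‖ ^ 2 := by positivity
      rw [hv k]
      simp only [hs]
      linarith
    have hdelta : Filter.Tendsto (fun k => s k - s (k+1)) Filter.atTop (nhds 0) := by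
      have h2 : Filter.Tendsto (fun k => s (k+1)) Filter.atTop (nhds l) :=
        hsl.comp (Filter.tendsto_add_atTop_nat 1)
      simpa using hsl.sub h2
    have habsv : ∀ k, l ≤ |v k| := by
      intro k
      have := hvs k
      have := hls k
      rw [abs_of_neg (hvneg k)]
      linarith
    have hsqv : ∀ k, l ^ 2 ≤ v k ^ 2 := by
      intro k
      have h1 := habsv k
      have := sq_abs (v k)
      nlinarith [abs_nonneg (v k)]
    have hminsq : Filter.Tendsto (fun k => min l (l ^ 2 / (L * ‖p k - x k‖ ^ 2)))
        Filter.atTop (nhds 0) := by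
      refine tendsto_of_tendsto_of_tendsto_of_le_of_le (g := fun _ => (0:ℝ))
        (h := fun k => 2 * (s k - s (k+1))) tendsto_const_nhds
        (by simpa using hdelta.const_mul 2) (fun k => ?_) (fun k => ?_)
      · exact le_min hlpos.le (div_nonneg (sq_nonneg _) (by positivity))
      · have h1 := hdec k
        have h2 : min l (l ^ 2 / (L * ‖p k - x k‖ ^ 2))
            ≤ min (|v k|) (v k ^ 2 / (L * ‖p k - x k‖ ^ 2)) := by
          have hDk := hD2pos k
          exact min_le_min (habsv k) ((div_le_div_iff_of_pos_right (by positivity)).mpr (hsqv k))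
        simp only [hs]
        linarith
    have hq : Filter.Tendsto (fun k => l ^ 2 / (L * ‖p k - x k‖ ^ 2))
        Filter.atTop (nhds 0) := by
      refine hminsq.congr' ?_
      filter_upwards [hminsq.eventually_lt_const hlpos] with k hk
      rcases le_or_gt l (l ^ 2 / (L * ‖p k - x k‖ ^ 2)) with h | h
      · rw [min_eq_left h] at hk; exact absurd hk (lt_irrefl _)
      · rw [min_eq_right h.le]
    have hqpos : ∀ k, 0 < l ^ 2 / (L * ‖p k - x k‖ ^ 2) := by
      intro k
      have := hD2pos k
      positivity
    have hq' : Filter.Tendsto (fun k => l ^ 2 / (L * ‖p k - x k‖ ^ 2))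
        Filter.atTop (nhdsWithin 0 (Set.Ioi 0)) :=
      tendsto_nhdsWithin_iff.mpr ⟨hq, Filter.Eventually.of_forall hqpos⟩
    have hinv : Filter.Tendsto (fun k => (l ^ 2 / (L * ‖p k - x k‖ ^ 2))⁻¹)
        Filter.atTop Filter.atTop := hq'.inv_tendsto_nhdsGT_zero
    have hD2top : Filter.Tendsto (fun k => ‖p k - x k‖ ^ 2) Filter.atTop Filter.atTop := by
      have h2 := hinv.atTop_mul_const' (by positivity : 0 < l ^ 2 / L)
      refine h2.congr fun k => ?_
      have := hD2pos k
      have hlne : l ≠ 0 := ne_of_gt hlpos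
      field_simp
    have hDtop : Filter.Tendsto (fun k => ‖p k - x k‖) Filter.atTop Filter.atTop := by
      rw [Filter.tendsto_atTop]
      intro b
      filter_upwards [Filter.tendsto_atTop.mp hD2top (b ^ 2 + 1)] with k hk
      nlinarith [norm_nonneg (p k - x k)]
    -- compactness extraction
    have hKcomp2 : IsCompact (C ∩ Metric.closedBall xstar (Real.sqrt (2 * s 0 / M))) :=
      (isCompact_closedBall _ _).inter_left hCcl
    have hxK0 : ∀ k, x k ∈ C ∩ Metric.closedBall xstar (Real.sqrt (2 * s 0 / M)) := by
      intro k
      refine ⟨hxC k, ?_⟩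
      rw [Metric.mem_closedBall, dist_eq_norm]
      refine (hbound k).trans (Real.sqrt_le_sqrt ?_)
      have h6 : f (x k) ≤ f (x 0) := hfmono (Nat.zero_le k)
      have := hglobal _ hx0
      exact (div_le_div_iff_of_pos_right hM).mpr (by simp only [hs]; linarith)
    obtain ⟨xbar, hxbarK, φ, hφmono, hxφ⟩ := hKcomp2.tendsto_subseq hxK0
    set u : ℕ → EuclideanSpace ℝ (Fin n) := fun k => ‖p k - x k‖⁻¹ • (p k - x k) with hu
    have hunorm : ∀ k, u k ∈ Metric.sphere (0 : EuclideanSpace ℝ (Fin n)) 1 := by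
      intro k
      have hDpos : 0 < ‖p k - x k‖ := norm_pos_iff.mpr (hdne k)
      rw [mem_sphere_zero_iff_norm, hu]
      rw [norm_smul, norm_inv, norm_norm]
      exact inv_mul_cancel₀ (ne_of_gt hDpos)
    obtain ⟨dbar, hdbar, ψ, hψmono, hdψ⟩ :=
      (isCompact_sphere (0 : EuclideanSpace ℝ (Fin n)) 1).tendsto_subseq
        (fun j => hunorm (φ j))
    set σ : ℕ → ℕ := φ ∘ ψ with hσ
    have hσmono : StrictMono σ := hφmono.comp hψmono
    have hxσ : Filter.Tendsto (fun j => x (σ j)) Filter.atTop (nhds xbar) :=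
      hxφ.comp hψmono.tendsto_atTop
    have huσ : Filter.Tendsto (fun j => u (σ j)) Filter.atTop (nhds dbar) := hdψ
    have hDσ : Filter.Tendsto (fun j => ‖p (σ j) - x (σ j)‖) Filter.atTop Filter.atTop :=
      hDtop.comp hσmono.tendsto_atTop
    have hxbarC : xbar ∈ C := hxbarK.1
    have hcone : ∀ y ∈ C, ∀ t : ℝ, 0 ≤ t → y + t • dbar ∈ C := by
      intro y hy t ht
      rcases eq_or_lt_of_le ht with h0 | htpos
      · rw [← h0, zero_smul, add_zero]; exact hy
      · set c : ℕ → EuclideanSpace ℝ (Fin n) :=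
          fun j => y + (t / ‖p (σ j) - x (σ j)‖) • (p (σ j) - y) with hc
        have hrw : ∀ j, c j = y + t • u (σ j)
            + (t / ‖p (σ j) - x (σ j)‖) • (x (σ j) - y) := by
          intro j
          simp only [hc, hu, smul_smul, smul_sub, div_eq_mul_inv]
          module
        have hinv0 : Filter.Tendsto (fun j => t / ‖p (σ j) - x (σ j)‖)
            Filter.atTop (nhds 0) := tendsto_const_nhds.div_atTop hDσ
        have hclim : Filter.Tendsto c Filter.atTop (nhds (y + t • dbar)) := by
          have h1 : Filter.Tendsto (fun j => y + t • u (σ j)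
              + (t / ‖p (σ j) - x (σ j)‖) • (x (σ j) - y)) Filter.atTop
              (nhds (y + t • dbar + (0:ℝ) • (xbar - y))) :=
            ((tendsto_const_nhds.add (tendsto_const_nhds.smul huσ)).add
              (hinv0.smul (hxσ.sub tendsto_const_nhds)))
          rw [zero_smul, add_zero] at h1
          exact h1.congr fun j => (hrw j).symm
        refine hCcl.mem_of_tendsto hclim ?_
        filter_upwards [hDσ.eventually_ge_atTop t] with j hj
        have hDpos : 0 < ‖p (σ j) - x (σ j)‖ := norm_pos_iff.mpr (hdne _)
        have hcoef1 : t / ‖p (σ j) - x (σ j)‖ ≤ 1 := (div_le_one hDpos).mpr hj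
        have hcoef0 : 0 ≤ t / ‖p (σ j) - x (σ j)‖ := div_nonneg ht hDpos.le
        have := hCconv hy (hpC (σ j)) (by linarith : (0:ℝ) ≤ 1 - t / ‖p (σ j) - x (σ j)‖)
          hcoef0 (by ring)
        rw [hc]
        convert this using 1
        module
    have hdbarne : dbar ≠ 0 := by
      intro h0
      rw [h0, mem_sphere_zero_iff_norm, norm_zero] at hdbar
      exact one_ne_zero hdbar.symm
    have hpos := hB xbar hxbarC dbar hcone hdbarne
    have hlim : Filter.Tendsto (fun j => (⟪gradient f (x (σ j)), u (σ j)⟫ : ℝ))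
        Filter.atTop (nhds ⟪gradient f xbar, dbar⟫) :=
      Filter.Tendsto.inner ((hgcont.tendsto xbar).comp hxσ) huσ
    have hle : (⟪gradient f xbar, dbar⟫ : ℝ) ≤ 0 := by
      refine le_of_tendsto hlim (Filter.Eventually.of_forall fun j => ?_)
      have hDpos : 0 < ‖p (σ j) - x (σ j)‖ := norm_pos_iff.mpr (hdne _)
      rw [hu, inner_smul_right, ← hv (σ j)]
      have := hvneg (σ j)
      have hinvpos : (0:ℝ) < ‖p (σ j) - x (σ j)‖⁻¹ := by positivity
      nlinarith
    linarith
  -- convergence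
  rw [hlzero] at hsl
  have hxtend : Filter.Tendsto x Filter.atTop (nhds xstar) := by
    rw [tendsto_iff_norm_sub_tendsto_zero]
    have hsqrt : Filter.Tendsto (fun k => Real.sqrt (2 * s k / M)) Filter.atTop (nhds 0) := by
      have h1 : Filter.Tendsto (fun k => 2 * s k / M) Filter.atTop (nhds 0) := by
        have := (hsl.const_mul 2).div_const M
        simpa using this
      have h2 := (Real.continuous_sqrt.tendsto 0).comp h1
      simpa [Real.sqrt_zero, Function.comp_def] using h2
    exact tendsto_of_tendsto_of_tendsto_of_le_of_le (g := fun _ => (0:ℝ))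
      tendsto_const_nhds hsqrt (fun k => norm_nonneg _) (fun k => hbound k)
  exact ⟨xstar, hxsC, hxtend, hglobal, hbound⟩
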